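/- (Sufficiency of scalar Lagrange multipliers under NNAMCQ.) Let x̄ ∈ D and ȳ ∈ f(x̄). Suppose NNAMCQ holds at x̄, and suppose there exist ξ ∈ Y₊*, η ∈ Z₊*, ζ ∈ W* with ξ ≠ 0 such that ξ(y) + η(z) + ζ(w) ≥ ξ(ȳ) for all x ∈ D, y ∈ f(x), z ∈ g(x), w ∈ h(x), and min η(g(x̄)) = 0. Then x̄ is a weakly efficient solution of (VP). -/

import Mathlib

open Pointwise

/-- Theorem 3.1 (sufficiency): under NNAMCQ, the existence of scalar Lagrange
multipliers with `ξ ≠ 0` and complementary slackness implies weak efficiency. -/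
theorem scalar_lagrange_sufficiency
    {X Y Z W : Type*}
    [AddCommGroup Y] [Module ℝ Y] [TopologicalSpace Y] [IsTopologicalAddGroup Y]
    [ContinuousSMul ℝ Y]
    [AddCommGroup Z] [Module ℝ Z] [TopologicalSpace Z] [IsTopologicalAddGroup Z]
    [ContinuousSMul ℝ Z]
    [AddCommGroup W] [Module ℝ W] [TopologicalSpace W] [IsTopologicalAddGroup W]
    [ContinuousSMul ℝ W]
    (f : X → Set Y) (g : X → Set Z) (h : X → Set W)
    (Ypos : Set Y) (hYconv : Convex ℝ Ypos) (hY0 : (0 : Y) ∈ Ypos)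
    (hYcone : ∀ t : ℝ, 0 < t → t • Ypos ⊆ Ypos)
    (hYint : (interior Ypos).Nonempty)
    (Zpos : Set Z)
    (D : Set X) (hD : D = {x | (g x ∩ (-Zpos)).Nonempty ∧ (0 : W) ∈ h x})
    (xbar : X) (hxbar : xbar ∈ D) (ybar : Y) (hybar : ybar ∈ f xbar)
    -- NNAMCQ holds at `xbar`:
    (hNNAMCQ : ∀ (η : Z →L[ℝ] ℝ) (ζ : W →L[ℝ] ℝ),
      (∀ z ∈ Zpos, 0 ≤ η z) →
      (∀ x ∈ D, ∀ z ∈ g x, ∀ w ∈ h x, 0 ≤ η z + ζ w) →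
      (∃ x ∈ D, ∃ z ∈ g x, ∃ w ∈ h x, η z + ζ w = 0) →
      ((∃ zbar ∈ g xbar, η zbar = 0) ∧ ∀ z ∈ g xbar, 0 ≤ η z) →
      η = 0 ∧ ζ = 0)
    -- existence of scalar Lagrange multipliers:
    (hmult : ∃ (ξ : Y →L[ℝ] ℝ) (η : Z →L[ℝ] ℝ) (ζ : W →L[ℝ] ℝ),
      ξ ≠ 0 ∧ (∀ y ∈ Ypos, 0 ≤ ξ y) ∧ (∀ z ∈ Zpos, 0 ≤ η z) ∧
      (∀ x ∈ D, ∀ y ∈ f x, ∀ z ∈ g x, ∀ w ∈ h x, ξ ybar ≤ ξ y + η z + ζ w) ∧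
      (∃ zbar ∈ g xbar, η zbar = 0) ∧ (∀ z ∈ g xbar, 0 ≤ η z)) :
    ∃ ybar' ∈ f xbar, ∀ x ∈ D, ∀ y ∈ f x, ybar' - y ∉ interior Ypos := by
  obtain ⟨ξ, η, ζ, hξne, hξpos, hηpos, hineq, -, -⟩ := hmult
  -- ξ is strictly positive on the interior of Ypos
  have key : ∀ u ∈ interior Ypos, 0 < ξ u := by
    intro u hu
    rcases lt_or_ge 0 (ξ u) with hlt | hle
    · exact hlt
    have hu0 : ξ u = 0 := le_antisymm hle (hξpos u (interior_subset hu))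
    exfalso
    apply hξne
    ext v
    show ξ v = 0
    have hc : Continuous fun t : ℝ => u + t • v := continuous_const.add (continuous_id.smul continuous_const)
    have hopen : IsOpen ((fun t : ℝ => u + t • v) ⁻¹' interior Ypos) :=
      isOpen_interior.preimage hc
    have h0 : (0 : ℝ) ∈ (fun t : ℝ => u + t • v) ⁻¹' interior Ypos := by
      simp [hu]
    obtain ⟨ε, hε, hball⟩ := Metric.isOpen_iff.mp hopen 0 h0
    have hmem : ∀ t : ℝ, |t| < ε → u + t • v ∈ Ypos := by
      intro t ht
      have : t ∈ Metric.ball (0 : ℝ) ε := by simpa [Real.dist_eq] using ht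
      exact interior_subset (hball this)
    have h1 : 0 ≤ (ε / 2) * ξ v := by
      have := hξpos _ (hmem (ε / 2) (by rw [abs_of_pos (by linarith)]; linarith))
      simpa [map_add, hu0] using this
    have h2 : 0 ≤ (-(ε / 2)) * ξ v := by
      have := hξpos _ (hmem (-(ε / 2)) (by rw [abs_of_neg (by linarith)]; linarith))
      simpa [map_add, hu0] using this
    nlinarith
  refine ⟨ybar, hybar, ?_⟩
  intro x hx y hy hmemint
  obtain ⟨⟨z, hzg, hzneg⟩, h0h⟩ : (g x ∩ (-Zpos)).Nonempty ∧ (0 : W) ∈ h x := by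
    rw [hD] at hx; exact hx
  have hηz : η z ≤ 0 := by
    have : -z ∈ Zpos := by simpa using hzneg
    have := hηpos _ this
    simpa using this
  have hζ0 : ζ 0 = 0 := map_zero ζ
  have hge := hineq x hx y hy z hzg 0 h0h
  have hpos := key _ hmemint
  rw [map_sub] at hpos
  linarith
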